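/- For each natural number j ≥ 1, with a_r = ((1/2)_r)²/(r!)², the identity ∑_{i=0}^{j-1} a_i/(j-i) = 4·a_j·∑_{i=0}^{j-1} 1/(2i+1) holds. -/

import Mathlib

open Polynomial

theorem stmt_14 (j : ℕ) (hj : 1 ≤ j)
    (a : ℕ → ℚ)
    (ha : ∀ r, a r = ((ascPochhammer ℚ r).eval (1 / 2)) ^ 2 / ((Nat.factorial r : ℚ)) ^ 2) :
    ∑ i ∈ Finset.range j, a i / ((j : ℚ) - (i : ℚ)) =
      4 * a j * ∑ i ∈ Finset.range j, 1 / (2 * (i : ℚ) + 1) := by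
  have ratio : ∀ r : ℕ, a (r + 1) = a r * ((2 * (r : ℚ) + 1) ^ 2 / (2 * (r : ℚ) + 2) ^ 2) := by
    intro r
    have h1 : ((r.factorial : ℚ)) ≠ 0 := Nat.cast_ne_zero.mpr r.factorial_ne_zero
    have h2 : (2 * (r : ℚ) + 2) ≠ 0 := by positivity
    rw [ha, ha, ascPochhammer_succ_right, Nat.factorial_succ]
    have hr1 : ((r : ℚ) + 1) ≠ 0 := by positivity
    push_cast
    simp only [Polynomial.eval_mul, Polynomial.eval_add, Polynomial.eval_X,
      Polynomial.eval_natCast]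
    field_simp
    ring
  induction j, hj using Nat.le_induction with
  | base =>
      simp only [Finset.sum_range_one, ha]
      norm_num [ascPochhammer_zero, ascPochhammer_one]
  | succ j hj ih =>
      set B : ℕ → ℚ := fun i => -(i : ℚ) ^ 2 * a i / (((j : ℚ) + 1) ^ 2 * ((j : ℚ) + 1 - (i : ℚ)))
        with hB
      have tele : ∀ i ∈ Finset.range j,
          a i / ((j : ℚ) + 1 - (i : ℚ)) =
            (2 * (j : ℚ) + 1) ^ 2 / (2 * (j : ℚ) + 2) ^ 2 * (a i / ((j : ℚ) - (i : ℚ)))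
              + (B (i + 1) - B i) := by
        intro i hi
        have hij : (i : ℚ) < (j : ℚ) := by exact_mod_cast Finset.mem_range.mp hi
        have d1 : (j : ℚ) - (i : ℚ) ≠ 0 := sub_ne_zero.mpr (ne_of_gt hij)
        have d2 : (j : ℚ) + 1 - (i : ℚ) ≠ 0 := by
          have : (i : ℚ) < (j : ℚ) + 1 := by linarith
          exact sub_ne_zero.mpr (ne_of_gt this)
        have d3 : (j : ℚ) + 1 - ((i : ℚ) + 1) ≠ 0 := by
          have : (j : ℚ) + 1 - ((i : ℚ) + 1) = (j : ℚ) - (i : ℚ) := by ring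
          rw [this]; exact d1
        have d4 : ((j : ℚ) + 1) ≠ 0 := by positivity
        have d5 : (2 * (i : ℚ) + 2) ≠ 0 := by positivity
        have d6 : (2 * (j : ℚ) + 2) ≠ 0 := by positivity
        simp only [hB, ratio i]
        push_cast
        field_simp
        ring
      have expand : ∑ i ∈ Finset.range j, a i / ((j : ℚ) + 1 - (i : ℚ)) =
          (2 * (j : ℚ) + 1) ^ 2 / (2 * (j : ℚ) + 2) ^ 2
            * ∑ i ∈ Finset.range j, a i / ((j : ℚ) - (i : ℚ)) + (B j - B 0) := by
        rw [Finset.sum_congr rfl tele, Finset.sum_add_distrib, ← Finset.mul_sum,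
          Finset.sum_range_sub]
      rw [Finset.sum_range_succ, Finset.sum_range_succ]
      push_cast
      rw [expand, ih, ratio j]
      simp only [hB]
      have h0 : ((j : ℚ) + 1 - (j : ℚ)) = 1 := by ring
      rw [h0]
      have d4 : ((j : ℚ) + 1) ≠ 0 := by positivity
      have d6 : (2 * (j : ℚ) + 2) ≠ 0 := by positivity
      have d7 : (2 * (j : ℚ) + 1) ≠ 0 := by positivity
      push_cast
      field_simp
      ring
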